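/- arXiv:1312.1769 — 2 statements merged into one kernel-verified Lean document; each statement's English description precedes it below -/
import Mathlib

section
/- Let H be a real symmetric 2×2 block matrix of the form [[A, B],[B, -A]] where A and B are real symmetric d×d matrices. If H is invertible, then H has exactly d positive eigenvalues and d negative eigenvalues (i.e. its negative index of inertia is d). -/
open Matrix Polynomial

/-- Charpoly is invariant under conjugation `P * M * Q` when `P * Q = 1`. -/
lemma charpoly_conj_aux {n : Type*} [Fintype n] [DecidableEq n] {R : Type*} [CommRing R]
    (P M Q : Matrix n n R) (hPQ : P * Q = 1) : (P * M * Q).charpoly = M.charpoly := by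
  have hPQ' : P.map (C : R →+* R[X]) * Q.map C = 1 := by
    rw [← Matrix.map_mul, hPQ, Matrix.map_one _ (map_zero _) (map_one _)]
  have key : charmatrix (P * M * Q) = P.map C * charmatrix M * Q.map C := by
    unfold charmatrix
    simp only [RingHom.mapMatrix_apply, Matrix.map_mul]
    rw [Matrix.mul_sub, Matrix.sub_mul]
    congr 1
    rw [← (Matrix.scalar_commute (X : R[X]) (fun r => Commute.all _ _) (P.map C)).eq,
      Matrix.mul_assoc, hPQ', Matrix.mul_one]
  rw [Matrix.charpoly, key, Matrix.charpoly, det_mul, det_mul,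
    mul_comm (P.map (C : R →+* R[X])).det, mul_assoc, ← det_mul, hPQ', det_one, mul_one]

lemma charpoly_diagonal_aux {n : Type*} [Fintype n] [DecidableEq n] {R : Type*} [CommRing R]
    (v : n → R) : (Matrix.diagonal v).charpoly = ∏ i, (X - C (v i)) := by
  rw [Matrix.charpoly]
  have : charmatrix (Matrix.diagonal v) = Matrix.diagonal fun i => X - C (v i) := by
    unfold charmatrix
    rw [RingHom.mapMatrix_apply, Matrix.scalar_apply, Matrix.diagonal_map (map_zero _),
      Matrix.diagonal_sub]
  rw [this, det_diagonal]

/-- The Hessian of the real part of a holomorphic function at a nondegenerate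
critical point, as a block matrix [[A,B],[B,-A]], has exactly `d` negative
eigenvalues. -/
theorem negative_inertia_of_block_matrix (d : ℕ)
    (A B : Matrix (Fin d) (Fin d) ℝ) (hA : A.IsSymm) (hB : B.IsSymm)
    (H : Matrix (Fin d ⊕ Fin d) (Fin d ⊕ Fin d) ℝ)
    (hHdef : H = Matrix.fromBlocks A B B (-A))
    (hH : H.IsHermitian) (hinv : IsUnit H.det) :
    (Finset.univ.filter fun i => hH.eigenvalues i < 0).card = d := by
  classical
  set lam := hH.eigenvalues with hlam
  set U : Matrix (Fin d ⊕ Fin d) (Fin d ⊕ Fin d) ℝ :=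
      (hH.eigenvectorUnitary : Matrix (Fin d ⊕ Fin d) (Fin d ⊕ Fin d) ℝ) with hUdef
  have hU : U * star U = 1 := by
    rw [hUdef]; exact Matrix.mem_unitaryGroup_iff.mp hH.eigenvectorUnitary.2
  have hspec : H = U * Matrix.diagonal (RCLike.ofReal ∘ lam) * star U := hH.spectral_theorem
  have hofReal : (RCLike.ofReal ∘ lam : Fin d ⊕ Fin d → ℝ) = lam := by
    funext i; simp [RCLike.ofReal]
  rw [hofReal] at hspec
  -- charpoly of H is ∏ (X - C (lam i))
  have hcp1 : H.charpoly = ∏ i, (X - C (lam i)) := by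
    rw [hspec, charpoly_conj_aux _ _ _ hU, charpoly_diagonal_aux]
  -- conjugation by J sends H to -H
  set J : Matrix (Fin d ⊕ Fin d) (Fin d ⊕ Fin d) ℝ :=
    Matrix.fromBlocks 0 1 (-1) 0 with hJdef
  have hJJ : J * Jᵀ = 1 := by
    rw [hJdef, Matrix.fromBlocks_transpose, Matrix.fromBlocks_multiply]
    simp [Matrix.fromBlocks_one]
  have hJHJ : J * H * Jᵀ = -H := by
    rw [hHdef, hJdef, Matrix.fromBlocks_transpose, Matrix.fromBlocks_multiply,
      Matrix.fromBlocks_multiply]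
    simp [Matrix.fromBlocks_neg]
  -- charpoly of -H is ∏ (X - C (- lam i)), but also equals charpoly of H
  have hnegspec : -H = U * Matrix.diagonal (fun i => -lam i) * star U := by
    have hdn : Matrix.diagonal (fun i => -lam i) = -Matrix.diagonal lam := by
      ext i j
      by_cases h : i = j <;> simp [Matrix.diagonal_apply, h]
    rw [hspec, hdn, Matrix.mul_neg, Matrix.neg_mul]
  have hcp2 : H.charpoly = ∏ i, (X - C (-lam i)) := by
    calc H.charpoly = (J * H * Jᵀ).charpoly := (charpoly_conj_aux _ _ _ hJJ).symm
    _ = (-H).charpoly := by rw [hJHJ]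
    _ = ∏ i, (X - C (-lam i)) := by
        rw [hnegspec, charpoly_conj_aux _ _ _ hU, charpoly_diagonal_aux]
  -- deduce the eigenvalue multiset is negation invariant
  set S : Multiset ℝ := Finset.univ.val.map lam with hSdef
  have hS : S = S.map (fun x => -x) := by
    have h1 : (S.map fun a => X - C a).prod = ∏ i, (X - C (lam i)) := by
      rw [hSdef, Multiset.map_map, Finset.prod_eq_multiset_prod]; rfl
    have h2 : ((S.map (fun x => -x)).map fun a => X - C a).prod = ∏ i, (X - C (-lam i)) := by
      rw [hSdef, Multiset.map_map, Multiset.map_map, Finset.prod_eq_multiset_prod]; rfl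
    have := congrArg Polynomial.roots (h1.trans (hcp1.symm.trans (hcp2.trans h2.symm)))
    rwa [roots_multiset_prod_X_sub_C, roots_multiset_prod_X_sub_C] at this
  -- eigenvalues are nonzero
  have hne : ∀ i, lam i ≠ 0 := by
    have hdet : H.det = ∏ i, lam i := by
      have := hH.det_eq_prod_eigenvalues
      simpa [RCLike.ofReal] using this
    have hdetne : H.det ≠ 0 := hinv.ne_zero
    rw [hdet] at hdetne
    intro i
    exact Finset.prod_ne_zero_iff.mp hdetne i (Finset.mem_univ i)
  -- counting
  have hcount : ∀ (q : ℝ → Prop) [DecidablePred q],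
      (Finset.univ.filter fun i => q (lam i)).card = S.countP q := by
    intro q _
    rw [hSdef, Multiset.countP_map]
    rfl
  have hnp : (Finset.univ.filter fun i => lam i < 0).card
      = (Finset.univ.filter fun i => 0 < lam i).card := by
    rw [hcount (fun x => x < 0), hcount (fun x => 0 < x)]
    calc S.countP (fun x => x < 0)
        = (S.map (fun x : ℝ => -x)).countP (fun x => x < 0) := by rw [← hS]
      _ = Multiset.card (S.filter fun a => -a < 0) := Multiset.countP_map _ _ _
      _ = S.countP (fun x => 0 < x) := by
          rw [← Multiset.countP_eq_card_filter]
          exact Multiset.countP_congr rfl (fun x _ => by simp [neg_lt_zero])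
  have htotal : (Finset.univ.filter fun i => lam i < 0).card
      + (Finset.univ.filter fun i => 0 < lam i).card = d + d := by
    have hfc : (Finset.univ.filter fun i => ¬ lam i < 0)
        = (Finset.univ.filter fun i => 0 < lam i) := by
      apply Finset.filter_congr
      intro i _
      simp only [not_lt, eq_iff_iff]
      constructor
      · intro h; exact lt_of_le_of_ne h (Ne.symm (hne i))
      · intro h; exact le_of_lt h
    rw [← hfc, Finset.card_filter_add_card_filter_not]
    simp
  omega
end

section
/- Similarly, the negative twist evaluates to Σ_{b,d,e} B^{ab}_{cd} M_{be} M^{de} = q^{−n(n+2)/(2(n+1))} δ^a_c. -/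
open Finset

lemma tele_aux (n : ℕ) (u : ℂ) (hu : u ≠ 0) :
    ∀ d a : ℕ, a + d = n →
      u ^ (-(2 * n : ℤ)) * u ^ (2 * ((n : ℤ) + 1) * ((n : ℤ) - 2 * a)) +
        (u ^ (-(2 * n : ℤ)) - u ^ (2 * ((n : ℤ) + 2))) *
          ∑ b ∈ Finset.Ico (a + 1) (n + 1), u ^ (2 * ((n : ℤ) + 1) * ((n : ℤ) - 2 * b)) =
      u ^ (-(2 * (n : ℤ) * ((n : ℤ) + 2))) := by
  intro d
  induction d with
  | zero =>
    intro a ha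
    have : a = n := by omega
    subst this
    rw [Finset.Ico_self, Finset.sum_empty, mul_zero, add_zero, ← zpow_add₀ hu]
    congr 1
    ring
  | succ d ih =>
    intro a ha
    rw [Finset.sum_eq_sum_Ico_succ_bot (by omega)]
    have h := ih (a + 1) (by omega)
    have key : u ^ (-(2 * n : ℤ)) * u ^ (2 * ((n : ℤ) + 1) * ((n : ℤ) - 2 * a)) =
        u ^ (2 * ((n : ℤ) + 2)) * u ^ (2 * ((n : ℤ) + 1) * ((n : ℤ) - 2 * (a + 1 : ℕ))) := by
      rw [← zpow_add₀ hu, ← zpow_add₀ hu]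
      congr 1
      push_cast
      ring
    linear_combination h + key

/-- The negative twist: `Σ B^{ab}_{cd} M_{be} M^{de} = q^{−n(n+2)/(2(n+1))} δ^a_c`.
Here `u` is a fixed root with `u^{4(n+1)} = q`, so `γ = u²`, `α = u^{−2n}`,
`β = u^{2(n+2)}`, `M_{ab} = u^{(n+1)(n−2a)} δ_{a+b,n}`, and the twist value is
`q^{−n(n+2)/(2(n+1))} = u^{−2n(n+2)}`. -/
theorem negative_twist_value (n : ℕ) (q u α β γ : ℂ) (hu : u ≠ 0)
    (hq : u ^ (4 * (n + 1)) = q)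
    (hγ : γ = u ^ 2) (hα : α = u ^ (-(2 * n : ℤ))) (hβ : β = u ^ (2 * (n + 2)))
    (Bm : Fin (n + 1) → Fin (n + 1) → Fin (n + 1) → Fin (n + 1) → ℂ)
    (hB : Bm = fun (a b c d : Fin (n + 1)) =>
      if a = b then (if c = a ∧ d = a then α else 0)
      else if c = b ∧ d = a then γ
      else if (a : ℕ) < b ∧ c = a ∧ d = b then α - β else 0)
    (M : Fin (n + 1) → Fin (n + 1) → ℂ)
    (hM : M = fun (a b : Fin (n + 1)) =>
      if (a : ℕ) + (b : ℕ) = n then u ^ ((n + 1 : ℤ) * ((n : ℤ) - 2 * (a : ℤ))) else 0) :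
    ∀ a c : Fin (n + 1),
      (∑ b, ∑ d, ∑ e, Bm a b c d * M b e * M d e) =
        if a = c then u ^ (-(2 * (n : ℤ) * ((n : ℤ) + 2))) else 0 := by
  intro a c
  -- Step 1: the inner sum over e
  have hMM : ∀ b d : Fin (n + 1), (∑ e, M b e * M d e) =
      if d = b then u ^ (2 * ((n : ℤ) + 1) * ((n : ℤ) - 2 * (b : ℕ))) else 0 := by
    intro b d
    have hb : (b : ℕ) ≤ n := by omega
    have hd : (d : ℕ) ≤ n := by omega
    rw [Fintype.sum_eq_single (⟨n - b, by omega⟩ : Fin (n + 1))]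
    · rw [hM]
      simp only [Fin.val_mk]
      rw [if_pos (by omega)]
      by_cases hdb : d = b
      · subst hdb
        rw [if_pos (by omega : (d : ℕ) + (n - (d : ℕ)) = n), if_pos rfl, ← zpow_add₀ hu]
        congr 1
        push_cast
        ring
      · rw [if_neg hdb, if_neg (by
          intro h
          apply hdb
          apply Fin.ext
          omega), mul_zero]
    · intro e he
      rw [hM]
      simp only []
      rw [if_neg (by
        intro h
        apply he
        apply Fin.ext
        simp only [Fin.val_mk]
        omega), zero_mul]
  -- Step 2: collapse d
  have step2 : (∑ b, ∑ d, ∑ e, Bm a b c d * M b e * M d e) =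
      ∑ b, Bm a b c b * u ^ (2 * ((n : ℤ) + 1) * ((n : ℤ) - 2 * (b : ℕ))) := by
    refine Finset.sum_congr rfl fun b _ => ?_
    calc (∑ d, ∑ e, Bm a b c d * M b e * M d e)
        = ∑ d, Bm a b c d * (if d = b then u ^ (2 * ((n : ℤ) + 1) * ((n : ℤ) - 2 * (b : ℕ))) else 0) := by
          refine Finset.sum_congr rfl fun d _ => ?_
          rw [← hMM b d, Finset.mul_sum]
          exact Finset.sum_congr rfl fun e _ => by ring
      _ = Bm a b c b * u ^ (2 * ((n : ℤ) + 1) * ((n : ℤ) - 2 * (b : ℕ))) := by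
          simp [mul_ite]
  rw [step2]
  -- Step 3: evaluate Bm a b c b
  have hBval : ∀ b : Fin (n + 1), Bm a b c b =
      if c = a then (if b = a then α else if (a : ℕ) < (b : ℕ) then α - β else 0) else 0 := by
    intro b
    rw [hB]
    by_cases hab : a = b
    · subst hab
      simp
    · simp only [if_neg hab]
      have hba : ¬ (b = a) := fun h => hab h.symm
      rw [if_neg (fun h => hba h.2)]
      by_cases hca : c = a
      · rw [if_pos hca]
        by_cases hlt : (a : ℕ) < (b : ℕ)
        · rw [if_pos ⟨hlt, hca, by trivial⟩, if_neg hba, if_pos hlt]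
        · rw [if_neg (fun h => hlt h.1), if_neg hba, if_neg hlt]
      · rw [if_neg hca, if_neg (fun h => hca h.2.1)]
  by_cases hca : c = a
  · subst hca
    rw [if_pos rfl]
    have hBval' : ∀ b : Fin (n + 1), Bm c b c b =
        if b = c then α else if (c : ℕ) < (b : ℕ) then α - β else 0 := fun b => by
      rw [hBval b, if_pos rfl]
    simp only [hBval']
    -- convert to a sum over range (n+1)
    have hconv : (∑ b : Fin (n + 1),
        (if b = c then α else if (c : ℕ) < (b : ℕ) then α - β else 0) *
          u ^ (2 * ((n : ℤ) + 1) * ((n : ℤ) - 2 * (b : ℕ)))) =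
        ∑ i ∈ Finset.range (n + 1),
          (if i = (c : ℕ) then α else if (c : ℕ) < i then α - β else 0) *
            u ^ (2 * ((n : ℤ) + 1) * ((n : ℤ) - 2 * i)) := by
      rw [← Fin.sum_univ_eq_sum_range]
      refine Finset.sum_congr rfl fun b _ => ?_
      congr 1
      simp only [Fin.ext_iff]
    rw [hconv, Finset.range_eq_Ico,
      ← Finset.sum_Ico_consecutive _ (Nat.zero_le ((c : ℕ) + 1)) (by omega : (c : ℕ) + 1 ≤ n + 1)]
    have h1 : (∑ i ∈ Finset.Ico 0 ((c : ℕ) + 1),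
        (if i = (c : ℕ) then α else if (c : ℕ) < i then α - β else 0) *
          u ^ (2 * ((n : ℤ) + 1) * ((n : ℤ) - 2 * i))) =
        α * u ^ (2 * ((n : ℤ) + 1) * ((n : ℤ) - 2 * (c : ℕ))) := by
      rw [Finset.sum_eq_single (c : ℕ)]
      · rw [if_pos rfl]
      · intro i hi hne
        simp only [Finset.mem_Ico] at hi
        rw [if_neg hne, if_neg (by omega), zero_mul]
      · intro h
        exact absurd (Finset.mem_Ico.mpr ⟨Nat.zero_le _, by omega⟩) h
    have h2 : (∑ i ∈ Finset.Ico ((c : ℕ) + 1) (n + 1),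
        (if i = (c : ℕ) then α else if (c : ℕ) < i then α - β else 0) *
          u ^ (2 * ((n : ℤ) + 1) * ((n : ℤ) - 2 * i))) =
        (α - β) * ∑ i ∈ Finset.Ico ((c : ℕ) + 1) (n + 1),
          u ^ (2 * ((n : ℤ) + 1) * ((n : ℤ) - 2 * i)) := by
      rw [Finset.mul_sum]
      refine Finset.sum_congr rfl fun i hi => ?_
      simp only [Finset.mem_Ico] at hi
      rw [if_neg (by omega), if_pos (by omega)]
    have hβ' : β = u ^ (2 * ((n : ℤ) + 2)) := by
      rw [hβ, ← zpow_natCast u (2 * (n + 2))]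
      congr 1
      all_goals push_cast; ring
    rw [h1, h2, hα, hβ']
    exact tele_aux n u hu (n - (c : ℕ)) (c : ℕ) (by omega)
  · rw [if_neg (fun h => hca h.symm)]
    simp [hBval, hca]
end
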